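/- DTC of a Gibbs measure: with K₁,…,Kₙ finite, λᵢ strictly positive, f : ∏Kᵢ → ℝ, and μ the Gibbs measure of f, we have DTC(μ) = ∫ D(ξ_{∇f(x,·)} ‖ λ₁×⋯×λₙ) μ(dx) - D(μ ‖ λ₁×⋯×λₙ), where ξ_{∇f(x,·)} is the product Gibbs measure with the additively separable potential ∇f(x,·). -/

import Mathlib

open Real Finset

/-- A probability mass function on a finite type. -/
def IsPMF {α : Type*} [Fintype α] (μ : α → ℝ) : Prop :=
  (∀ x, 0 ≤ μ x) ∧ ∑ x, μ x = 1

/-- Kullback–Leibler divergence. -/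
noncomputable def KL {α : Type*} [Fintype α] (μ γ : α → ℝ) : ℝ :=
  ∑ x, μ x * Real.log (μ x / γ x)

/-- The Gibbs measure of the potential `f` relative to the reference measure `l`. -/
noncomputable def gibbs {α : Type*} [Fintype α] (f : α → ℝ) (l : α → ℝ) : α → ℝ :=
  fun x => Real.exp (f x) * l x / ∑ y, Real.exp (f y) * l y

/-- Product of the measures `l i` on the product space. -/
noncomputable def prodMeas {n : ℕ} {K : Fin n → Type*} [∀ i, Fintype (K i)]
    (l : ∀ i, K i → ℝ) : (∀ i, K i) → ℝ :=
  fun x => ∏ i, l i (x i)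

/-- Discrete partial derivative `∂ᵢf(x,y)` with reference points `star`. -/
noncomputable def dpart {n : ℕ} {K : Fin n → Type*} (f : (∀ i, K i) → ℝ)
    (star : ∀ i, K i) (i : Fin n) (x : ∀ j, K j) (y : K i) : ℝ :=
  f (Function.update x i y) - f (Function.update x i (star i))

/-- Discrete gradient `∇f(x,y) = Σᵢ ∂ᵢf(x,yᵢ)` with reference points `star`. -/
noncomputable def dgrad {n : ℕ} {K : Fin n → Type*} (f : (∀ i, K i) → ℝ)
    (star : ∀ i, K i) (x y : ∀ i, K i) : ℝ :=
  ∑ i, dpart f star i x (y i)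

/-- The product Gibbs measure `ξ_{∇f(x,·)} = ∏ᵢ ξ_{∂ᵢf(x,·)}` of the additively
separable potential `∇f(x,·)`. -/
noncomputable def xiGrad {n : ℕ} {K : Fin n → Type*} [∀ i, Fintype (K i)]
    (f : (∀ i, K i) → ℝ) (star : ∀ i, K i) (l : ∀ i, K i → ℝ) (x : ∀ i, K i) :
    (∀ i, K i) → ℝ :=
  fun y => ∏ i, gibbs (dpart f star i x) (l i) (y i)

/-- Shannon entropy of a probability mass function. -/
noncomputable def ent {α : Type*} [Fintype α] (μ : α → ℝ) : ℝ :=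
  -∑ x, μ x * Real.log (μ x)

/-- Glue a value `y` in coordinate `i` to a configuration `z` of the remaining coordinates. -/
def glue {n : ℕ} {K : Fin n → Type*} (i : Fin n)
    (z : (j : {j : Fin n // j ≠ i}) → K j.1) (y : K i) : ∀ j, K j :=
  fun j => if h : j = i then cast (congrArg K h.symm) y else z ⟨j, h⟩

/-- Marginal of a measure on `∏ j, K j` on the coordinates other than `i`. -/
noncomputable def margRest {n : ℕ} {K : Fin n → Type*} [∀ i, Fintype (K i)]
    (μ : (∀ j, K j) → ℝ) (i : Fin n) : ((j : {j : Fin n // j ≠ i}) → K j.1) → ℝ :=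
  fun z => ∑ y : K i, μ (glue i z y)

/-- Dual total correlation: `DTC(μ) = H(μ) - Σᵢ H_μ(xᵢ | x_{[n]∖i})`, where the
conditional entropy is `H(μ) - H(margRest μ i)`. -/
noncomputable def DTC {n : ℕ} {K : Fin n → Type*} [∀ i, Fintype (K i)]
    (μ : (∀ j, K j) → ℝ) : ℝ :=
  ent μ - ∑ i, (ent μ - ent (margRest μ i))

section Aux
variable {n : ℕ} {K : Fin n → Type*}

lemma glue_i (i : Fin n) (z : (j : {j : Fin n // j ≠ i}) → K j.1) (y : K i) :
    glue i z y i = y := by simp [glue]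

lemma glue_ne (i : Fin n) (z : (j : {j : Fin n // j ≠ i}) → K j.1) (y : K i)
    (j : Fin n) (h : j ≠ i) : glue i z y j = z ⟨j, h⟩ := by simp [glue, h]

def restr (i : Fin n) (x : ∀ j, K j) : (j : {j : Fin n // j ≠ i}) → K j.1 :=
  fun j => x j.1

lemma glue_restr (i : Fin n) (x : ∀ j, K j) : glue i (restr i x) (x i) = x := by
  funext j
  by_cases h : j = i
  · subst h; simp [glue]
  · simp [glue, h, restr]

lemma restr_glue (i : Fin n) (z : (j : {j : Fin n // j ≠ i}) → K j.1) (y : K i) :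
    restr i (glue i z y) = z := by
  funext j
  simp [restr, glue, j.2]

lemma update_glue (i : Fin n) (z : (j : {j : Fin n // j ≠ i}) → K j.1) (y y' : K i) :
    Function.update (glue i z y') i y = glue i z y := by
  funext j
  by_cases h : j = i
  · subst h; simp [glue]
  · rw [Function.update_of_ne h, glue_ne i z y' j h, glue_ne i z y j h]

variable [∀ i, Fintype (K i)]

/-- The glue equivalence. -/
def glueEquiv (i : Fin n) : ((j : {j : Fin n // j ≠ i}) → K j.1) × K i ≃ (∀ j, K j) where
  toFun p := glue i p.1 p.2
  invFun x := (restr i x, x i)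
  left_inv p := by
    refine Prod.ext ?_ ?_
    · exact restr_glue i p.1 p.2
    · exact glue_i i p.1 p.2
  right_inv x := glue_restr i x

lemma sum_glue (i : Fin n) (h : (∀ j, K j) → ℝ) :
    ∑ x, h x = ∑ z, ∑ y : K i, h (glue i z y) := by
  rw [← (glueEquiv i).sum_comp h, Fintype.sum_prod_type]
  rfl

lemma prod_glue (i : Fin n) (G : ∀ j, K j → ℝ) (z : (j : {j : Fin n // j ≠ i}) → K j.1)
    (y : K i) :
    ∏ j, G j (glue i z y j) = G i y * ∏ j : {j : Fin n // j ≠ i}, G j.1 (z j) := by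
  rw [← Finset.mul_prod_erase Finset.univ _ (Finset.mem_univ i), glue_i]
  congr 1
  rw [Finset.prod_subtype (p := fun j => j ≠ i) (Finset.univ.erase i) (fun j => by simp)
    (fun j => G j (glue i z y j))]
  exact Finset.prod_congr rfl fun j _ => by rw [glue_ne i z y j.1 j.2]

lemma sum_pi_prod {ι : Type*} [Fintype ι] [DecidableEq ι] {κ : ι → Type*}
    [∀ i, Fintype (κ i)] (g : ∀ i, κ i → ℝ) :
    ∑ y : ∀ i, κ i, ∏ i, g i (y i) = ∏ i, ∑ b, g i b := by
  rw [Finset.prod_univ_sum, Fintype.piFinset_univ]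

lemma sum_pi_prod_mul (g : ∀ i, K i → ℝ) (hg : ∀ i, ∑ b, g i b = 1) (j : Fin n)
    (r : K j → ℝ) :
    ∑ y : ∀ i, K i, (∏ i, g i (y i)) * r (y j) = ∑ b, g j b * r b := by
  rw [sum_glue j]
  have hz : ∑ z : (k : {k : Fin n // k ≠ j}) → K k.1, ∏ k, g k.1 (z k) = 1 := by
    rw [sum_pi_prod]
    exact Finset.prod_eq_one fun k _ => hg k.1
  calc ∑ z, ∑ b : K j, (∏ i, g i (glue j z b i)) * r (glue j z b j)
      = ∑ b : K j, ∑ z : (k : {k : Fin n // k ≠ j}) → K k.1,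
          (g j b * ∏ k : {k : Fin n // k ≠ j}, g k.1 (z k)) * r b := by
        rw [Finset.sum_comm]
        refine Finset.sum_congr rfl fun b _ => Finset.sum_congr rfl fun w _ => ?_
        rw [prod_glue, glue_i]
    _ = ∑ b : K j, g j b * r b := by
        refine Finset.sum_congr rfl fun b _ => ?_
        calc ∑ w : (k : {k : Fin n // k ≠ j}) → K k.1,
              (g j b * ∏ k : {k : Fin n // k ≠ j}, g k.1 (w k)) * r b
            = (g j b * r b) * ∑ w : (k : {k : Fin n // k ≠ j}) → K k.1,
                ∏ k : {k : Fin n // k ≠ j}, g k.1 (w k) := by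
              rw [Finset.mul_sum]
              exact Finset.sum_congr rfl fun w _ => by ring
          _ = g j b * r b := by rw [hz, mul_one]

end Aux

section Gibbs
variable {α : Type*} [Fintype α] [Nonempty α]

lemma gibbs_denom_pos (g l : α → ℝ) (hl : ∀ x, 0 < l x) :
    0 < ∑ y, Real.exp (g y) * l y :=
  Finset.sum_pos (fun y _ => mul_pos (Real.exp_pos _) (hl y)) Finset.univ_nonempty

lemma gibbs_pos (g l : α → ℝ) (hl : ∀ x, 0 < l x) (x : α) : 0 < gibbs g l x :=
  div_pos (mul_pos (Real.exp_pos _) (hl x)) (gibbs_denom_pos g l hl)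

lemma gibbs_sum (g l : α → ℝ) (hl : ∀ x, 0 < l x) : ∑ x, gibbs g l x = 1 := by
  unfold gibbs
  rw [← Finset.sum_div]
  exact div_self (gibbs_denom_pos g l hl).ne'

end Gibbs
set_option maxHeartbeats 1000000 in
/-- DTC of a Gibbs measure:
`DTC(μ) = ∫ D(ξ_{∇f(x,·)} ‖ λ₁×⋯×λₙ) μ(dx) - D(μ ‖ λ₁×⋯×λₙ)`. -/
theorem DTC_of_gibbs {n : ℕ} (K : Fin n → Type*)
    [∀ i, Fintype (K i)] [∀ i, Nonempty (K i)]
    (l : ∀ i, K i → ℝ) (hl : ∀ i, IsPMF (l i)) (hlpos : ∀ i x, 0 < l i x)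
    (star : ∀ i, K i) (f : (∀ i, K i) → ℝ) :
    DTC (gibbs f (prodMeas l))
      = (∑ x, gibbs f (prodMeas l) x * KL (xiGrad f star l x) (prodMeas l))
        - KL (gibbs f (prodMeas l)) (prodMeas l) := by
  classical
  have hppos : ∀ x, 0 < prodMeas l x := fun x => Finset.prod_pos fun i _ => hlpos i (x i)
  set Z := ∑ y, Real.exp (f y) * prodMeas l y with hZdef
  have hZpos : 0 < Z := gibbs_denom_pos f (prodMeas l) hppos
  set μ := gibbs f (prodMeas l) with hμdef
  have hμx : ∀ x, μ x = Real.exp (f x) * prodMeas l x / Z := fun x => rfl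
  have hμpos : ∀ x, 0 < μ x := gibbs_pos f (prodMeas l) hppos
  -- the key per-coordinate identity
  have key : ∀ i : Fin n, ∑ x, μ x * KL (gibbs (dpart f star i x) (l i)) (l i)
      = (∑ x, μ x * Real.log (μ x)) + ent (margRest μ i)
        - ∑ x, μ x * Real.log (l i (x i)) := by
    intro i
    set S : ((j : {j : Fin n // j ≠ i}) → K j.1) → ℝ :=
      fun z => ∑ y, Real.exp (f (glue i z y)) * l i y with hSdef
    set W : ((j : {j : Fin n // j ≠ i}) → K j.1) → ℝ :=
      fun z => ∏ j : {j : Fin n // j ≠ i}, l j.1 (z j) with hWdef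
    have hSpos : ∀ z, 0 < S z := fun z =>
      Finset.sum_pos (fun y _ => mul_pos (Real.exp_pos _) (hlpos i y)) Finset.univ_nonempty
    have hWpos : ∀ z, 0 < W z := fun z => Finset.prod_pos fun j _ => hlpos j.1 (z j)
    have hxifun : ∀ z (y₀ : K i), gibbs (dpart f star i (glue i z y₀)) (l i)
        = fun w => Real.exp (f (glue i z w)) * l i w / S z := by
      intro z y₀
      funext w
      unfold gibbs dpart
      simp_rw [update_glue, Real.exp_sub]
      have he : Real.exp (f (glue i z (star i))) ≠ 0 := (Real.exp_pos _).ne'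
      have hsum : ∑ y, Real.exp (f (glue i z y)) / Real.exp (f (glue i z (star i))) * l i y
          = (∑ y, Real.exp (f (glue i z y)) * l i y) / Real.exp (f (glue i z (star i))) := by
        rw [Finset.sum_div]
        exact Finset.sum_congr rfl fun y _ => by ring
      rw [hsum, div_mul_eq_mul_div, div_div_div_cancel_right₀]
      exact he
    have hprodglue : ∀ z y, prodMeas l (glue i z y) = l i y * W z := fun z y =>
      prod_glue i l z y
    have hmargz : ∀ z, margRest μ i z = W z * S z / Z := by
      intro z
      show ∑ y, μ (glue i z y) = W z * S z / Z
      simp_rw [hμx, hprodglue]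
      show _ = (W z * ∑ y, Real.exp (f (glue i z y)) * l i y) / Z
      rw [Finset.mul_sum, Finset.sum_div]
      exact Finset.sum_congr rfl fun y _ => by ring
    have hmargpos : ∀ z, 0 < margRest μ i z := fun z => by
      rw [hmargz]
      exact div_pos (mul_pos (hWpos z) (hSpos z)) hZpos
    have hBglue : ∀ z y, μ (glue i z y)
        = margRest μ i z * (Real.exp (f (glue i z y)) * l i y / S z) := by
      intro z y
      rw [hμx, hmargz, hprodglue]
      have hS0 : S z ≠ 0 := (hSpos z).ne'
      have hZ0 : Z ≠ 0 := hZpos.ne'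
      field_simp
    have hBgibbs : ∀ z y, μ (glue i z y)
        = margRest μ i z * gibbs (dpart f star i (glue i z y)) (l i) y := by
      intro z y
      rw [hxifun z y]
      exact hBglue z y
    have hF2 : ∑ x, μ x * KL (gibbs (dpart f star i x) (l i)) (l i)
        = ∑ x, μ x * Real.log (gibbs (dpart f star i x) (l i) (x i) / l i (x i)) := by
      rw [sum_glue i (fun x => μ x * KL (gibbs (dpart f star i x) (l i)) (l i)),
        sum_glue i (fun x => μ x * Real.log (gibbs (dpart f star i x) (l i) (x i) / l i (x i)))]
      refine Finset.sum_congr rfl fun z _ => ?_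
      calc ∑ y, μ (glue i z y) * KL (gibbs (dpart f star i (glue i z y)) (l i)) (l i)
          = ∑ y, μ (glue i z y)
              * KL (fun w => Real.exp (f (glue i z w)) * l i w / S z) (l i) := by
            exact Finset.sum_congr rfl fun y _ => by rw [hxifun z y]
        _ = margRest μ i z * KL (fun w => Real.exp (f (glue i z w)) * l i w / S z) (l i) := by
            rw [← Finset.sum_mul]; rfl
        _ = ∑ w, μ (glue i z w)
              * Real.log ((Real.exp (f (glue i z w)) * l i w / S z) / l i w) := by
            unfold KL
            rw [Finset.mul_sum]
            refine Finset.sum_congr rfl fun w _ => ?_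
            rw [hBglue z w]
            ring
        _ = ∑ w, μ (glue i z w)
              * Real.log (gibbs (dpart f star i (glue i z w)) (l i) ((glue i z w) i)
                  / l i ((glue i z w) i)) := by
            refine Finset.sum_congr rfl fun w _ => ?_
            rw [glue_i, hxifun z w]
    have hF3 : ∀ x, Real.log (gibbs (dpart f star i x) (l i) (x i) / l i (x i))
        = Real.log (μ x) - Real.log (margRest μ i (restr i x)) - Real.log (l i (x i)) := by
      intro x
      have hx := hBgibbs (restr i x) (x i)
      rw [glue_restr i x] at hx
      have hg : gibbs (dpart f star i x) (l i) (x i) = μ x / margRest μ i (restr i x) := by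
        rw [hx, mul_comm, mul_div_assoc, div_self (hmargpos (restr i x)).ne', mul_one]
      rw [hg, div_div, Real.log_div (hμpos x).ne'
        (mul_ne_zero (hmargpos (restr i x)).ne' (hlpos i (x i)).ne'),
        Real.log_mul (hmargpos (restr i x)).ne' (hlpos i (x i)).ne']
      ring
    have hF4 : ∑ x, μ x * Real.log (margRest μ i (restr i x)) = -(ent (margRest μ i)) := by
      rw [sum_glue i (fun x => μ x * Real.log (margRest μ i (restr i x)))]
      unfold ent
      rw [neg_neg]
      refine Finset.sum_congr rfl fun z _ => ?_
      simp_rw [restr_glue]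
      rw [← Finset.sum_mul]
      rfl
    rw [hF2]
    simp_rw [hF3, mul_sub]
    rw [Finset.sum_sub_distrib, Finset.sum_sub_distrib, hF4]
    ring
  -- KL of the product measure splits
  have hKLprod : ∀ x, KL (xiGrad f star l x) (prodMeas l)
      = ∑ i, KL (gibbs (dpart f star i x) (l i)) (l i) := by
    intro x
    have hξpos : ∀ (i : Fin n) b, 0 < gibbs (dpart f star i x) (l i) b := fun i b =>
      gibbs_pos _ _ (hlpos i) b
    unfold KL xiGrad prodMeas
    have h1 : ∀ y : ∀ i, K i,
        Real.log ((∏ i, gibbs (dpart f star i x) (l i) (y i)) / ∏ i, l i (y i))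
          = ∑ i, Real.log (gibbs (dpart f star i x) (l i) (y i) / l i (y i)) := by
      intro y
      rw [← Finset.prod_div_distrib, Real.log_prod]
      exact fun i _ => (div_pos (hξpos i (y i)) (hlpos i (y i))).ne'
    simp_rw [h1, Finset.mul_sum]
    rw [Finset.sum_comm]
    exact Finset.sum_congr rfl fun j _ =>
      sum_pi_prod_mul (fun i => gibbs (dpart f star i x) (l i))
        (fun i => gibbs_sum (dpart f star i x) (l i) (hlpos i)) j
        (fun b => Real.log (gibbs (dpart f star j x) (l j) b / l j b))
  have hC : ∑ i, ∑ x, μ x * Real.log (l i (x i)) = ∑ x, μ x * Real.log (prodMeas l x) := by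
    rw [Finset.sum_comm]
    refine Finset.sum_congr rfl fun x _ => ?_
    rw [← Finset.mul_sum, ← Real.log_prod fun i _ => (hlpos i (x i)).ne']
    rfl
  have hKLμ : KL μ (prodMeas l)
      = (∑ x, μ x * Real.log (μ x)) - ∑ x, μ x * Real.log (prodMeas l x) := by
    unfold KL
    rw [← Finset.sum_sub_distrib]
    refine Finset.sum_congr rfl fun x _ => ?_
    rw [Real.log_div (hμpos x).ne' (hppos x).ne']
    ring
  have hR : ∑ x, μ x * KL (xiGrad f star l x) (prodMeas l)
      = (∑ i, ((∑ x, μ x * Real.log (μ x)) + ent (margRest μ i)))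
        - ∑ x, μ x * Real.log (prodMeas l x) := by
    simp_rw [hKLprod, Finset.mul_sum]
    rw [Finset.sum_comm]
    calc ∑ i, ∑ x, μ x * KL (gibbs (dpart f star i x) (l i)) (l i)
        = ∑ i, ((∑ x, μ x * Real.log (μ x)) + ent (margRest μ i)
            - ∑ x, μ x * Real.log (l i (x i))) :=
          Finset.sum_congr rfl fun i _ => key i
      _ = _ := by rw [Finset.sum_sub_distrib, hC]
  rw [hR, hKLμ]
  unfold DTC
  have hent : ent μ = -∑ x, μ x * Real.log (μ x) := rfl
  rw [hent]
  have hneg : ∑ i, (-∑ x, μ x * Real.log (μ x) - ent (margRest μ i))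
      = -∑ i, ((∑ x, μ x * Real.log (μ x)) + ent (margRest μ i)) := by
    calc ∑ i, (-∑ x, μ x * Real.log (μ x) - ent (margRest μ i))
        = ∑ i, -((∑ x, μ x * Real.log (μ x)) + ent (margRest μ i)) :=
          Finset.sum_congr rfl fun i _ => by ring
      _ = _ := Finset.sum_neg_distrib _
  rw [hneg]
  ring
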